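/- Let s be odd, k = GF(2^s), and θ, β ∈ k with θ^2 + θ = β/(β^2 + β + 1). Then 1/(θ^2 + θ + 1) = 1 + β/(β+1) + (β/(β+1))^2, provided β ≠ 1; moreover Tr(1/(θ^2 + θ + 1)) = 1. -/

import Mathlib

section Aux

lemma trace_sq_aux (s : ℕ) (x : GaloisField 2 s) :
    Algebra.trace (ZMod 2) (GaloisField 2 s) (x ^ 2) =
      Algebra.trace (ZMod 2) (GaloisField 2 s) x := by
  have : Fact (Nat.Prime 2) := ⟨Nat.prime_two⟩
  have hcomm : ∀ r : ZMod 2, frobeniusEquiv (GaloisField 2 s) 2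
      (algebraMap (ZMod 2) (GaloisField 2 s) r) = algebraMap (ZMod 2) (GaloisField 2 s) r :=
    fun r => by simp [frobeniusEquiv_apply, frobenius_def, ← map_pow, ZMod.pow_card]
  have key := Algebra.trace_eq_of_algEquiv
    (AlgEquiv.ofRingEquiv (f := frobeniusEquiv (GaloisField 2 s) 2) hcomm) x
  have hx : (AlgEquiv.ofRingEquiv (f := frobeniusEquiv (GaloisField 2 s) 2) hcomm) x = x ^ 2 := rfl
  rwa [hx] at key

lemma trace_one_aux (s : ℕ) (hs : 0 < s) (hodd : Odd s) :
    Algebra.trace (ZMod 2) (GaloisField 2 s) 1 = 1 := by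
  have := Algebra.trace_algebraMap (R := ZMod 2) (S := GaloisField 2 s) 1
  rw [map_one] at this
  rw [this, GaloisField.finrank 2 hs.ne']
  obtain ⟨m, rfl⟩ := hodd
  rw [nsmul_eq_mul, mul_one]
  push_cast
  have h2 : (2 : ZMod 2) = 0 := rfl
  rw [h2]; ring

end Aux

/-- For `s` odd and `θ, β ∈ GF(2^s)` with `θ^2 + θ = β/(β^2+β+1)`:
if `β ≠ 1` then `1/(θ^2+θ+1) = 1 + β/(β+1) + (β/(β+1))^2`; moreover
`Tr(1/(θ^2+θ+1)) = 1`. -/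
theorem stmt_3 (s : ℕ) (hs : 0 < s) (hodd : Odd s) (θ β : GaloisField 2 s)
    (h : θ ^ 2 + θ = β / (β ^ 2 + β + 1)) :
    (β ≠ 1 → 1 / (θ ^ 2 + θ + 1) = 1 + β / (β + 1) + (β / (β + 1)) ^ 2) ∧
      Algebra.trace (ZMod 2) (GaloisField 2 s) (1 / (θ ^ 2 + θ + 1)) = 1 := by
  set Tr := Algebra.trace (ZMod 2) (GaloisField 2 s) with hTr
  have tr_sq : ∀ x : GaloisField 2 s, Tr (x ^ 2) = Tr x := trace_sq_aux s
  have tr_one : Tr 1 = 1 := trace_one_aux s hs hodd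
  have two_eq_zero : (2 : GaloisField 2 s) = 0 := CharTwo.two_eq_zero
  have tr2 : ∀ x : ZMod 2, x + x = 0 := by decide
  -- β² + β + 1 ≠ 0
  have hD : β ^ 2 + β + 1 ≠ 0 := by
    intro h0
    have h0' := congrArg Tr h0
    rw [map_add, map_add, tr_sq, tr_one, map_zero] at h0'
    have h1 : (1 : ZMod 2) = 0 := by linear_combination h0' - tr2 (Tr β)
    exact one_ne_zero h1
  -- β ≠ 1
  have hbne1 : β ≠ 1 := by
    intro h1
    subst h1
    have hden : (1 : GaloisField 2 s) ^ 2 + 1 + 1 = 1 := by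
      linear_combination two_eq_zero
    rw [hden, div_one] at h
    have h' := congrArg Tr h
    rw [map_add, tr_sq, tr_one, tr2 (Tr θ)] at h'
    exact zero_ne_one h'
  have hb1 : β + 1 ≠ 0 := by
    intro h0
    exact hbne1 (by linear_combination h0 - two_eq_zero)
  -- main algebraic identity
  have hθ1 : θ ^ 2 + θ + 1 = (β + 1) ^ 2 / (β ^ 2 + β + 1) := by
    rw [h, div_add_one hD]
    congr 1
    ring
  have hsq : (β + 1) ^ 2 ≠ 0 := pow_ne_zero 2 hb1
  have main : 1 / (θ ^ 2 + θ + 1) = 1 + β / (β + 1) + (β / (β + 1)) ^ 2 := by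
    rw [hθ1, one_div_div]
    field_simp
    linear_combination ((β ^ 2 + β) * (β + 1) ^ 2 + (-(2*β) - 4*β^2 - 3*β^3 - β^4)) * two_eq_zero
  refine ⟨fun _ => main, ?_⟩
  rw [main, map_add, map_add, tr_one, tr_sq]
  linear_combination tr2 (Tr (β / (β + 1)))
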